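/- Let X be a standardized k-Dirac mixture with k > 1, let γ = E[X³], s** = γ/2, and g** = Σ_{i=1}^k 1{μ_i ≤ s**}; assume μ_1 ≤ s** ≤ μ_k. Then Φ**(X) = 4 · Var|X − s**| satisfies Φ**(X) ≥ 1 if and only if 4 α_{g**} − (2 η_{g**} − 1) γ + √(γ² + 3) ≥ 0. -/

import Mathlib

open MeasureTheory ProbabilityTheory

/-- For a standardized `k`-Dirac mixture `X` (law `P`), let `γ = E[X³]`,
`s⋆⋆ = γ / 2`, `g⋆⋆ = Σ_{i=1}^k 1{μᵢ ≤ s⋆⋆}`, and assume `μ₁ ≤ s⋆⋆ ≤ μ_k`. Then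
`Φ⋆⋆(X) = 4 · Var |X - s⋆⋆| ≥ 1` if and only if
`4 α_{g⋆⋆} - (2 η_{g⋆⋆} - 1) γ + √(γ² + 3) ≥ 0`. -/
theorem stmt_11 (k : ℕ) (hk : 1 < k) (ε μ : ℕ → ℝ)
    (hε : ∀ i ∈ Finset.Icc 1 k, 0 < ε i)
    (hsum : ∑ i ∈ Finset.Icc 1 k, ε i = 1)
    (hord : ∀ i ∈ Finset.Ico 1 k, μ i < μ (i + 1))
    (P : Measure ℝ)
    (hP : P = ∑ i ∈ Finset.Icc 1 k, ENNReal.ofReal (ε i) • Measure.dirac (μ i))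
    (hmean : ∫ x, x ∂P = 0) (hm2 : ∫ x, x ^ 2 ∂P = 1)
    (γ sstarstar : ℝ) (hγ : γ = ∫ x, x ^ 3 ∂P) (hss : sstarstar = γ / 2)
    (gstarstar : ℕ)
    (hg : gstarstar = ∑ i ∈ Finset.Icc 1 k, if μ i ≤ sstarstar then 1 else 0)
    (hlo : μ 1 ≤ sstarstar) (hhi : sstarstar ≤ μ k)
    (α η : ℝ)
    (hα : α = ∑ i ∈ Finset.Icc 1 gstarstar, ε i * μ i)
    (hη : η = ∑ i ∈ Finset.Icc 1 gstarstar, ε i) :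
    1 ≤ 4 * variance (fun x => |x - sstarstar|) P ↔
      0 ≤ 4 * α - (2 * η - 1) * γ + Real.sqrt (γ ^ 2 + 3) := by
  classical
  -- basic integrability facts
  have hdint : ∀ (f : ℝ → ℝ) (a : ℝ), Integrable f (Measure.dirac a) := fun f a =>
    (integrable_const (f a)).congr (MeasureTheory.ae_eq_dirac f).symm
  have hPint : ∀ f : ℝ → ℝ, Integrable f P := by
    intro f
    rw [hP, integrable_finset_sum_measure]
    intro i hi
    exact (hdint f (μ i)).smul_measure ENNReal.ofReal_ne_top
  have hPcalc : ∀ f : ℝ → ℝ, ∫ x, f x ∂P = ∑ i ∈ Finset.Icc 1 k, ε i * f (μ i) := by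
    intro f
    rw [hP, integral_finset_sum_measure
      (fun i _ => (hdint f (μ i)).smul_measure ENNReal.ofReal_ne_top)]
    refine Finset.sum_congr rfl fun i hi => ?_
    rw [integral_smul_measure, integral_dirac, ENNReal.toReal_ofReal (hε i hi).le,
      smul_eq_mul]
  have hprob : IsProbabilityMeasure P := by
    constructor
    rw [hP, Measure.finset_sum_apply]
    have : ∀ i ∈ Finset.Icc 1 k,
        (ENNReal.ofReal (ε i) • Measure.dirac (μ i)) Set.univ = ENNReal.ofReal (ε i) := by
      intro i hi
      simp [Measure.smul_apply]
    rw [Finset.sum_congr rfl this, ← ENNReal.ofReal_sum_of_nonneg (fun i hi => (hε i hi).le),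
      hsum, ENNReal.ofReal_one]
  -- monotonicity of μ
  have hmono : ∀ i j : ℕ, 1 ≤ i → i ≤ j → j ≤ k → μ i ≤ μ j := by
    intro i j h1 hij
    induction j, hij using Nat.le_induction with
    | base => intro _; exact le_rfl
    | succ n hn ih =>
      intro hk'
      exact (ih (by omega)).trans
        (hord n (Finset.mem_Ico.mpr ⟨by omega, by omega⟩)).le
  -- the set of indices with μ i ≤ s is Icc 1 g
  set S : Finset ℕ := (Finset.Icc 1 k).filter (fun i => μ i ≤ sstarstar) with hS
  have hgcard : gstarstar = S.card := by
    rw [hg, hS, Finset.card_filter]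
  have h1S : (1 : ℕ) ∈ S :=
    Finset.mem_filter.mpr ⟨Finset.mem_Icc.mpr ⟨le_rfl, hk.le⟩, hlo⟩
  have hSne : S.Nonempty := ⟨1, h1S⟩
  have hSIcc : S = Finset.Icc 1 (S.max' hSne) := by
    ext i
    constructor
    · intro hi
      obtain ⟨hik, _⟩ := Finset.mem_filter.mp hi
      exact Finset.mem_Icc.mpr ⟨(Finset.mem_Icc.mp hik).1, S.le_max' i hi⟩
    · intro hi
      obtain ⟨h1i, hij⟩ := Finset.mem_Icc.mp hi
      obtain ⟨hjk, hμj⟩ := Finset.mem_filter.mp (S.max'_mem hSne)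
      have hjk' := (Finset.mem_Icc.mp hjk).2
      exact Finset.mem_filter.mpr ⟨Finset.mem_Icc.mpr ⟨h1i, hij.trans hjk'⟩,
        le_trans (hmono i _ h1i hij hjk') hμj⟩
  have hgj : gstarstar = S.max' hSne := by
    have hc := congrArg Finset.card hSIcc
    rw [Nat.card_Icc] at hc
    omega
  have hSg : S = Finset.Icc 1 gstarstar := by rw [hgj]; exact hSIcc
  have hg1 : 1 ≤ gstarstar := by
    have := h1S
    rw [hSg, Finset.mem_Icc] at this
    exact this.2
  have hgk : gstarstar ≤ k := by
    obtain ⟨hjk, _⟩ := Finset.mem_filter.mp (S.max'_mem hSne)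
    rw [← hgj] at hjk
    exact (Finset.mem_Icc.mp hjk).2
  have hle : ∀ i ∈ Finset.Icc 1 gstarstar, μ i ≤ sstarstar := by
    intro i hi
    rw [← hSg] at hi
    exact (Finset.mem_filter.mp hi).2
  have hgt : ∀ i ∈ Finset.Ioc gstarstar k, sstarstar ≤ μ i := by
    intro i hi
    obtain ⟨hgi, hik⟩ := Finset.mem_Ioc.mp hi
    by_contra h
    push_neg at h
    have hiS : i ∈ S :=
      Finset.mem_filter.mpr ⟨Finset.mem_Icc.mpr ⟨by omega, hik⟩, h.le⟩
    rw [hSg, Finset.mem_Icc] at hiS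
    omega
  -- splitting sums
  have hicc : ∀ n : ℕ, Finset.Icc 1 n = Finset.Ioc 0 n := by
    intro n; ext i; simp only [Finset.mem_Icc, Finset.mem_Ioc]; omega
  have hsplit : ∀ F : ℕ → ℝ, ∑ i ∈ Finset.Icc 1 k, F i =
      ∑ i ∈ Finset.Icc 1 gstarstar, F i + ∑ i ∈ Finset.Ioc gstarstar k, F i := by
    intro F
    rw [hicc k, hicc gstarstar]
    exact (Finset.sum_Ioc_consecutive F (Nat.zero_le _) hgk).symm
  -- basic moment sums
  have hA : ∑ i ∈ Finset.Icc 1 k, ε i * μ i = 0 := by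
    have := hPcalc (fun x => x)
    rw [← this]; exact hmean
  have hB : ∑ i ∈ Finset.Icc 1 k, ε i * μ i ^ 2 = 1 := by
    have := hPcalc (fun x => x ^ 2)
    rw [← this]; exact hm2
  have hαTail : ∑ i ∈ Finset.Ioc gstarstar k, ε i * μ i = -α := by
    have := hsplit (fun i => ε i * μ i)
    rw [hA, ← hα] at this
    linarith
  have hηTail : ∑ i ∈ Finset.Ioc gstarstar k, ε i = 1 - η := by
    have := hsplit ε
    rw [hsum, ← hη] at this
    linarith
  -- compute E|X - s|
  have e1 : ∑ i ∈ Finset.Icc 1 gstarstar, ε i * |μ i - sstarstar|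
      = sstarstar * η - α := by
    rw [hα, hη, Finset.mul_sum, ← Finset.sum_sub_distrib]
    refine Finset.sum_congr rfl fun i hi => ?_
    rw [abs_of_nonpos (by linarith [hle i hi])]
    ring
  have e2 : ∑ i ∈ Finset.Ioc gstarstar k, ε i * |μ i - sstarstar|
      = -α - sstarstar * (1 - η) := by
    have h1 : ∑ i ∈ Finset.Ioc gstarstar k, ε i * |μ i - sstarstar|
        = ∑ i ∈ Finset.Ioc gstarstar k, (ε i * μ i - sstarstar * ε i) := by
      refine Finset.sum_congr rfl fun i hi => ?_
      rw [abs_of_nonneg (by linarith [hgt i hi])]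
      ring
    rw [h1, Finset.sum_sub_distrib, hαTail, ← Finset.mul_sum, hηTail]
  have hm : ∫ x, |x - sstarstar| ∂P = sstarstar * (2 * η - 1) - 2 * α := by
    rw [hPcalc (fun x => |x - sstarstar|)]
    rw [hsplit (fun i => ε i * |μ i - sstarstar|), e1, e2]
    ring
  have hm2' : ∫ x, |x - sstarstar| ^ 2 ∂P = 1 + sstarstar ^ 2 := by
    rw [hPcalc (fun x => |x - sstarstar| ^ 2)]
    have hterm : ∀ i ∈ Finset.Icc 1 k, ε i * |μ i - sstarstar| ^ 2
        = ε i * μ i ^ 2 - 2 * sstarstar * (ε i * μ i) + sstarstar ^ 2 * ε i := by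
      intro i hi
      rw [sq_abs]
      ring
    rw [Finset.sum_congr rfl hterm, Finset.sum_add_distrib, Finset.sum_sub_distrib,
      ← Finset.mul_sum, ← Finset.mul_sum, hA, hB, hsum]
    ring
  -- compute the variance
  have hmem : MemLp (fun x => |x - sstarstar|) 2 P :=
    (memLp_two_iff_integrable_sq
      ((continuous_id.sub continuous_const).abs.aestronglyMeasurable)).mpr (hPint _)
  have hvar : variance (fun x => |x - sstarstar|) P
      = (1 + sstarstar ^ 2) - (sstarstar * (2 * η - 1) - 2 * α) ^ 2 := by
    rw [variance_eq_sub hmem]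
    simp only [Pi.pow_apply]
    rw [hm2', hm]
  have hm0 : 0 ≤ sstarstar * (2 * η - 1) - 2 * α := by
    rw [← hm]
    exact integral_nonneg fun x => abs_nonneg _
  -- final algebra
  have hγ2 : γ = 2 * sstarstar := by rw [hss]; ring
  have hsqrw : γ ^ 2 + 3 = 4 * sstarstar ^ 2 + 3 := by rw [hγ2]; ring
  have hkey : 2 * (sstarstar * (2 * η - 1) - 2 * α) ≤ Real.sqrt (γ ^ 2 + 3)
      ↔ (2 * (sstarstar * (2 * η - 1) - 2 * α)) ^ 2 ≤ γ ^ 2 + 3 :=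
    Real.le_sqrt (by linarith) (by positivity)
  have h2m : (2 * η - 1) * γ - 4 * α = 2 * (sstarstar * (2 * η - 1) - 2 * α) := by
    rw [hγ2]; ring
  rw [hvar]
  constructor
  · intro h
    have hsq : (2 * (sstarstar * (2 * η - 1) - 2 * α)) ^ 2 ≤ γ ^ 2 + 3 := by
      rw [hsqrw]; nlinarith
    have := hkey.mpr hsq
    linarith
  · intro h
    have h1 : 2 * (sstarstar * (2 * η - 1) - 2 * α) ≤ Real.sqrt (γ ^ 2 + 3) := by
      linarith
    have h2 := hkey.mp h1
    rw [hsqrw] at h2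
    nlinarith
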